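/- Feasibility under box uncertainty (sufficiency direction of Theorem 4.2): let δ_B > 0. If there exist an index M ∈ {1,…,n} and λ ≥ 0 such that the matrix A − λ(e₀e₀ᵀ − e_M e_Mᵀ) is positive semidefinite, then for all ζ ∈ ℝⁿ with ‖ζ‖_∞ ≤ δ_B one has ((δ_B μ⁽⁰⁾ + Σ_{j=1}^n ζⱼ μ⁽ʲ⁾)ᵀ x)² ≥ τ² δ_B². -/

import Mathlib

open Matrix

noncomputable section

/-- `a j = (μ⁽ʲ⁾)ᵀ x`, the dot product of the `j`-th expected-return vector with `x`. -/
def avec (n : ℕ) (x : Fin n → ℝ) (μ : Fin (n + 1) → Fin n → ℝ) : Fin (n + 1) → ℝ :=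
  fun j => μ j ⬝ᵥ x

/-- The symmetric matrix `A = a aᵀ - τ² e₀ e₀ᵀ`. -/
def Amat (n : ℕ) (x : Fin n → ℝ) (τ : ℝ) (μ : Fin (n + 1) → Fin n → ℝ) :
    Matrix (Fin (n + 1)) (Fin (n + 1)) ℝ :=
  Matrix.of fun i j =>
    avec n x μ i * avec n x μ j - if i = 0 ∧ j = 0 then τ ^ 2 else 0

/-- The matrix `B⁽ᴱ⁾ = diag(1, -1, …, -1)`. -/
def BE (n : ℕ) : Matrix (Fin (n + 1)) (Fin (n + 1)) ℝ :=
  Matrix.diagonal fun i => if i = 0 then 1 else -1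

/-- The matrix `B⁽ᴾ⁾ = e₀e₀ᵀ - J`: `(0,0)`-entry `1`, entries `-1` for `i, j ≥ 1`,
zero elsewhere. -/
def BP (n : ℕ) : Matrix (Fin (n + 1)) (Fin (n + 1)) ℝ :=
  Matrix.of fun i j =>
    if i = 0 ∧ j = 0 then 1 else if i ≠ 0 ∧ j ≠ 0 then -1 else 0

/-- A real matrix is positive semidefinite: `zᵀ M z ≥ 0` for all `z`. -/
def IsPSD {d : ℕ} (M : Matrix (Fin d) (Fin d) ℝ) : Prop :=
  ∀ z : Fin d → ℝ, 0 ≤ z ⬝ᵥ M *ᵥ z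

/-- Quadratic form of a single-entry diagonal basis matrix. -/
lemma quad_stdBasis {d : ℕ} (i : Fin d) (z : Fin d → ℝ) :
    z ⬝ᵥ (Matrix.single i i (1:ℝ)) *ᵥ z = z i * z i := by
  simp [mulVec, dotProduct, single, ite_and, Finset.sum_ite_eq, Finset.sum_ite_eq']

/-- Quadratic form of a rank-one matrix. -/
lemma quad_rankOne {d : ℕ} (a z : Fin d → ℝ) :
    z ⬝ᵥ (Matrix.of fun i j => a i * a j) *ᵥ z = (a ⬝ᵥ z) * (a ⬝ᵥ z) := by
  simp only [mulVec, dotProduct, of_apply, Finset.mul_sum, Finset.sum_mul]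
  rw [Finset.sum_comm]
  congr 1; ext i; congr 1; ext j; ring

/-- Quadratic form of `Amat`. -/
lemma quad_Amat (n : ℕ) (x : Fin n → ℝ) (τ : ℝ) (μ : Fin (n + 1) → Fin n → ℝ)
    (z : Fin (n + 1) → ℝ) :
    z ⬝ᵥ (Amat n x τ μ) *ᵥ z =
      (avec n x μ ⬝ᵥ z) * (avec n x μ ⬝ᵥ z) - τ ^ 2 * (z 0 * z 0) := by
  have : Amat n x τ μ =
      (Matrix.of fun i j => avec n x μ i * avec n x μ j) -
        τ ^ 2 • Matrix.single (0 : Fin (n+1)) (0 : Fin (n+1)) (1:ℝ) := by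
    ext i j
    simp [Amat, single, ite_and, eq_comm]
  rw [this, sub_mulVec, dotProduct_sub, smul_mulVec, dotProduct_smul,
    quad_rankOne, quad_stdBasis]
  simp

/-- Dot product is additive in the first argument over finite sums. -/
lemma sum_dotProduct' {m k : ℕ} (f : Fin m → Fin k → ℝ) (x : Fin k → ℝ) :
    (∑ j, f j) ⬝ᵥ x = ∑ j, f j ⬝ᵥ x := by
  simp only [dotProduct, Finset.sum_apply, Finset.sum_mul]
  exact Finset.sum_comm

theorem feasibility_box_sufficient (n : ℕ) (hn : 1 ≤ n) (x : Fin n → ℝ) (τ : ℝ)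
    (μ : Fin (n + 1) → Fin n → ℝ) (δB : ℝ) (hδB : 0 < δB)
    (h : ∃ M : Fin n, ∃ lam : ℝ, 0 ≤ lam ∧
        IsPSD (Amat n x τ μ -
          lam • (Matrix.single (0 : Fin (n + 1)) (0 : Fin (n + 1)) (1 : ℝ) -
            Matrix.single M.succ M.succ (1 : ℝ)))) :
    ∀ ζ : Fin n → ℝ, (∀ j, |ζ j| ≤ δB) →
      τ ^ 2 * δB ^ 2 ≤ ((δB • μ 0 + ∑ j : Fin n, ζ j • μ j.succ) ⬝ᵥ x) ^ 2 := by
  obtain ⟨M, lam, hlam, hpsd⟩ := h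
  intro ζ hζ
  set z : Fin (n + 1) → ℝ := Fin.cons δB ζ with hz
  have hz0 : z 0 = δB := rfl
  have hzs : ∀ j : Fin n, z j.succ = ζ j := fun j => rfl
  have hquad := hpsd z
  rw [sub_mulVec, dotProduct_sub, smul_mulVec, dotProduct_smul, sub_mulVec,
    dotProduct_sub, quad_stdBasis, quad_stdBasis, quad_Amat] at hquad
  have hdot : avec n x μ ⬝ᵥ z = (δB • μ 0 + ∑ j : Fin n, ζ j • μ j.succ) ⬝ᵥ x := by
    rw [add_dotProduct, smul_dotProduct, sum_dotProduct']
    simp only [smul_dotProduct, smul_eq_mul]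
    rw [dotProduct, Fin.sum_univ_succ]
    simp [avec, hz0, hzs, mul_comm]
  have hM : z M.succ * z M.succ ≤ z 0 * z 0 := by
    rw [hz0, hzs]
    have := hζ M
    nlinarith [abs_nonneg (ζ M), le_abs_self (ζ M), neg_abs_le (ζ M)]
  have hlm : 0 ≤ lam * (z 0 * z 0 - z M.succ * z M.succ) :=
    mul_nonneg hlam (by linarith)
  rw [hdot] at hquad
  rw [hz0] at hquad hlm
  simp only [smul_eq_mul] at hquad
  rw [pow_two, pow_two]
  linarith
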